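/- For all alphabet sizes m_1,…,m_d ∈ ℕ, every nonempty finite collection 𝕊 of nonempty subsets of [d], and all sample sizes n_𝕊 ∈ ℕ^𝕊, the minimax testing radius satisfies ρ*(n_𝕊) ≤ ∑_{S∈𝕊} ((|X_S|−1)/n_S)^{1/2} + 2 (log 2 · ∑_{S∈𝕊} 1/n_S)^{1/2}. -/

import Mathlib

open Finset

/-- The space `𝒳_S = ∏_{j ∈ S} [m_j]`. -/
abbrev Cell {d : ℕ} (m : Fin d → ℕ) (S : Finset (Fin d)) : Type :=
  ∀ j : {x : Fin d // x ∈ S}, Fin (m j.1)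

/-- The full space `𝒳 = ∏_{j=1}^d [m_j]`. -/
abbrev Full {d : ℕ} (m : Fin d → ℕ) : Type := ∀ j, Fin (m j)

/-- Coordinate projection `x ↦ x_S`. -/
def proj {d : ℕ} (m : Fin d → ℕ) (S : Finset (Fin d)) (x : Full m) : Cell m S :=
  fun j => x j.1

/-- Coordinate projection `𝒳_S → 𝒳_T` for `T ⊆ S`. -/
def projSub {d : ℕ} (m : Fin d → ℕ) {S T : Finset (Fin d)} (h : T ⊆ S) (z : Cell m S) :
    Cell m T :=
  fun j => z ⟨j.1, h j.2⟩

/-- `p` is a probability mass function. -/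
def IsPMF {α : Type*} [Fintype α] (p : α → ℝ) : Prop :=
  (∀ x, 0 ≤ p x) ∧ ∑ x, p x = 1

/-- `p` is a family of probability mass functions indexed by `𝕊`. -/
def IsFamily {d : ℕ} (m : Fin d → ℕ) (𝕊 : Finset (Finset (Fin d)))
    (p : ∀ S : Finset (Fin d), Cell m S → ℝ) : Prop :=
  ∀ S ∈ 𝕊, IsPMF (p S)

/-- The family `P_𝕊` is compatible: there is a joint pmf on `𝒳` with the given margins. -/
def Compatible {d : ℕ} (m : Fin d → ℕ) (𝕊 : Finset (Finset (Fin d)))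
    (p : ∀ S : Finset (Fin d), Cell m S → ℝ) : Prop :=
  ∃ q : Full m → ℝ, IsPMF q ∧
    ∀ S ∈ 𝕊, ∀ y : Cell m S, p S y = ∑ x : Full m, if proj m S x = y then q x else 0

/-- The marginal mass function of `pS` on `𝒳_T`, for `T ⊆ S`. -/
noncomputable def marg {d : ℕ} (m : Fin d → ℕ) {S : Finset (Fin d)} (T : Finset (Fin d)) (h : T ⊆ S)
    (pS : Cell m S → ℝ) (y : Cell m T) : ℝ :=
  ∑ z : Cell m S, if projSub m h z = y then pS z else 0

/-- The family `P_𝕊` is consistent: overlapping margins agree. -/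
def Consistent {d : ℕ} (m : Fin d → ℕ) (𝕊 : Finset (Finset (Fin d)))
    (p : ∀ S : Finset (Fin d), Cell m S → ℝ) : Prop :=
  ∀ S₁ ∈ 𝕊, ∀ S₂ ∈ 𝕊, (S₁ ∩ S₂).Nonempty →
    marg m (S₁ ∩ S₂) inter_subset_left (p S₁) =
      marg m (S₁ ∩ S₂) inter_subset_right (p S₂)

/-- The class `𝒢_𝕊^+`. -/
def GPlus {d : ℕ} (m : Fin d → ℕ) (𝕊 : Finset (Finset (Fin d)))
    (f : ∀ S : Finset (Fin d), Cell m S → ℝ) : Prop :=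
  (∀ S ∈ 𝕊, ∀ y, -1 ≤ f S y) ∧ ∀ x : Full m, 0 ≤ ∑ S ∈ 𝕊, f S (proj m S x)

/-- The linear functional `R(P_𝕊, f_𝕊)`. -/
noncomputable def RL {d : ℕ} (m : Fin d → ℕ) (𝕊 : Finset (Finset (Fin d)))
    (p f : ∀ S : Finset (Fin d), Cell m S → ℝ) : ℝ :=
  -(1 / (𝕊.card : ℝ)) * ∑ S ∈ 𝕊, ∑ y, f S y * p S y

/-- The incompatibility index `R(P_𝕊)`. -/
noncomputable def Rix {d : ℕ} (m : Fin d → ℕ) (𝕊 : Finset (Finset (Fin d)))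
    (p : ∀ S : Finset (Fin d), Cell m S → ℝ) : ℝ :=
  sSup {t | ∃ f, GPlus m 𝕊 f ∧ t = RL m 𝕊 p f}

/-- Total variation distance between two mass functions on a finite space. -/
noncomputable def dTV {α : Type*} [Fintype α] (p q : α → ℝ) : ℝ :=
  sSup {t | ∃ A : Finset α, t = |∑ y ∈ A, (p y - q y)|}

/-- Sample space: independent samples `X_{S,i}`, `i ∈ [n_S]`, for each `S ∈ 𝕊`. -/
abbrev Samples {d : ℕ} (m : Fin d → ℕ) (𝕊 : Finset (Finset (Fin d)))
    (n : Finset (Fin d) → ℕ) : Type :=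
  ∀ S : {T : Finset (Fin d) // T ∈ 𝕊}, Fin (n S.1) → Cell m S.1

/-- Joint mass of a sample under independence, `X_{S,i} ∼ P_S`. -/
noncomputable def jointMass {d : ℕ} (m : Fin d → ℕ) (𝕊 : Finset (Finset (Fin d)))
    (n : Finset (Fin d) → ℕ) (p : ∀ S : Finset (Fin d), Cell m S → ℝ)
    (ω : Samples m 𝕊 n) : ℝ :=
  ∏ S : {T : Finset (Fin d) // T ∈ 𝕊}, ∏ i, p S.1 (ω S i)

/-- Probability of an event under the joint law of the data. -/
noncomputable def Prob {d : ℕ} (m : Fin d → ℕ) (𝕊 : Finset (Finset (Fin d)))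
    (n : Finset (Fin d) → ℕ) (p : ∀ S : Finset (Fin d), Cell m S → ℝ)
    (E : Set (Samples m 𝕊 n)) : ℝ :=
  ∑ ω : Samples m 𝕊 n, E.indicator (jointMass m 𝕊 n p) ω

/-- The empirical family `P̂_𝕊` built from the data (arbitrarily extended off `𝕊`). -/
noncomputable def emp {d : ℕ} (m : Fin d → ℕ) (𝕊 : Finset (Finset (Fin d)))
    (n : Finset (Fin d) → ℕ) (p : ∀ S : Finset (Fin d), Cell m S → ℝ)
    (ω : Samples m 𝕊 n) : ∀ S : Finset (Fin d), Cell m S → ℝ :=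
  fun S y =>
    if h : S ∈ 𝕊 then
      (n S : ℝ)⁻¹ * ((Finset.univ.filter fun i => ω ⟨S, h⟩ i = y).card : ℝ)
    else p S y

/-- Expectation of a test statistic under the joint law of the data. -/
noncomputable def expTest {d : ℕ} (m : Fin d → ℕ) (𝕊 : Finset (Finset (Fin d)))
    (n : Finset (Fin d) → ℕ) (p : ∀ S : Finset (Fin d), Cell m S → ℝ)
    (ψ : Samples m 𝕊 n → ℝ) : ℝ :=
  ∑ ω : Samples m 𝕊 n, ψ ω * jointMass m 𝕊 n p ω

/-- The minimax risk `ℛ(n_𝕊, ρ)`. -/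
noncomputable def minimaxRisk {d : ℕ} (m : Fin d → ℕ) (𝕊 : Finset (Finset (Fin d)))
    (n : Finset (Fin d) → ℕ) (ρ : ℝ) : ℝ :=
  sInf {t : ℝ | ∃ ψ : Samples m 𝕊 n → ℝ, (∀ ω, ψ ω ∈ Set.Icc (0 : ℝ) 1) ∧
    t = sSup {x | ∃ p, IsFamily m 𝕊 p ∧ Compatible m 𝕊 p ∧ x = expTest m 𝕊 n p ψ} +
        sSup {x | ∃ p, IsFamily m 𝕊 p ∧ ρ ≤ Rix m 𝕊 p ∧
          x = expTest m 𝕊 n p (fun ω => 1 - ψ ω)}}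

/-- The minimax testing radius `ρ*(n_𝕊)`. -/
noncomputable def rhoStar {d : ℕ} (m : Fin d → ℕ) (𝕊 : Finset (Finset (Fin d)))
    (n : Finset (Fin d) → ℕ) : ℝ :=
  sInf {ρ : ℝ | 0 ≤ ρ ∧ minimaxRisk m 𝕊 n ρ ≤ 1 / 2}

open Real Finset


set_option maxHeartbeats 1000000 in

lemma hl_core (u : ℝ) (hu0 : 0 ≤ u) (hu1 : u ≤ 1) (θ : ℝ) :
    u * Real.exp (2*(1-u)*θ) + (1-u) * Real.exp (-(2*u)*θ) ≤ Real.exp (θ^2/2) := by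
  rcases eq_or_lt_of_le hu0 with h0 | h0
  · simp [← h0]
    nlinarith [Real.exp_pos (θ^2/2), Real.one_le_exp (by positivity : (0:ℝ) ≤ θ^2/2)]
  rcases eq_or_lt_of_le hu1 with h1 | h1
  · simp [h1]
    nlinarith [Real.exp_pos (θ^2/2), Real.one_le_exp (by positivity : (0:ℝ) ≤ θ^2/2)]
  -- now 0 < u < 1
  set A : ℝ → ℝ := fun t => u * Real.exp (2*(1-u)*t) with hA
  set B : ℝ → ℝ := fun t => (1-u) * Real.exp (-(2*u)*t) with hB
  have hApos : ∀ t, 0 < A t := fun t => mul_pos h0 (Real.exp_pos _)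
  have hBpos : ∀ t, 0 < B t := fun t => mul_pos (by linarith) (Real.exp_pos _)
  set φ : ℝ → ℝ := fun t => A t + B t with hφ
  have hφpos : ∀ t, 0 < φ t := fun t => add_pos (hApos t) (hBpos t)
  have hdA : ∀ t, HasDerivAt A (2*(1-u) * A t) t := by
    intro t
    have : HasDerivAt (fun t : ℝ => 2*(1-u)*t) (2*(1-u)) t := by
      simpa using (hasDerivAt_id t).const_mul (2*(1-u))
    simpa [hA, mul_comm, mul_left_comm] using (this.exp.const_mul u)
  have hdB : ∀ t, HasDerivAt B (-(2*u) * B t) t := by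
    intro t
    have : HasDerivAt (fun t : ℝ => -(2*u)*t) (-(2*u)) t := by
      simpa using (hasDerivAt_id t).const_mul (-(2*u))
    simpa [hB, mul_comm, mul_left_comm] using (this.exp.const_mul (1-u))
  set φ' : ℝ → ℝ := fun t => 2*(1-u) * A t - 2*u * B t with hφ'
  have hdφ : ∀ t, HasDerivAt φ (φ' t) t := by
    intro t
    exact ((hdA t).add (hdB t)).congr_deriv (by simp only [hφ']; ring)
  -- K' t = t - φ' t / φ t ; K = t^2/2 - log (φ t)
  set K' : ℝ → ℝ := fun t => t - φ' t / φ t with hK'def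
  set K : ℝ → ℝ := fun t => t^2/2 - Real.log (φ t) with hKdef
  have hdK : ∀ t, HasDerivAt K (K' t) t := by
    intro t
    have h1 : HasDerivAt (fun t : ℝ => t^2/2) t t := by
      simpa using ((hasDerivAt_pow 2 t).div_const 2)
    have h2 : HasDerivAt (fun t => Real.log (φ t)) (φ' t / φ t) t :=
      (hdφ t).log (ne_of_gt (hφpos t))
    exact h1.sub h2
  have hdφ' : ∀ t, HasDerivAt φ' ((2*(1-u))^2 * A t + (2*u)^2 * B t) t := by
    intro t
    have := ((hdA t).const_mul (2*(1-u))).sub ((hdB t).const_mul (2*u))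
    exact this.congr_deriv (by ring)
  have hdK' : ∀ t, HasDerivAt K' (1 - (((2*(1-u))^2 * A t + (2*u)^2 * B t) * φ t - φ' t * φ' t) / (φ t)^2) t := by
    intro t
    have := (hasDerivAt_id t).sub ((hdφ' t).div (hdφ t) (ne_of_gt (hφpos t)))
    exact this
  have hK'nonneg : ∀ t, 0 ≤ 1 - (((2*(1-u))^2 * A t + (2*u)^2 * B t) * φ t - φ' t * φ' t) / (φ t)^2 := by
    intro t
    rw [sub_nonneg, div_le_one (pow_pos (hφpos t) 2)]
    have : ((2*(1-u))^2 * A t + (2*u)^2 * B t) * φ t - φ' t * φ' t = 4 * (A t * B t) := by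
      simp only [hφ, hφ']; ring
    rw [this]
    have hφt : φ t = A t + B t := rfl
    rw [hφt]
    nlinarith [sq_nonneg (A t - B t)]
  have hdiffK : Differentiable ℝ K := fun t => (hdK t).differentiableAt
  have hK'mono : Monotone K' := by
    apply monotone_of_deriv_nonneg
    · exact fun t => (hdK' t).differentiableAt
    · intro t
      rw [(hdK' t).deriv]
      exact hK'nonneg t
  have hK'0 : K' 0 = 0 := by
    have hA0 : A 0 = u := by simp [hA]
    have hB0 : B 0 = 1 - u := by simp [hB]
    have e1 : 2*(1-u) * A 0 - 2*u * B 0 = 0 := by rw [hA0, hB0]; ring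
    simp only [hK'def, hφ', e1]
    simp
  have hK0 : K 0 = 0 := by
    have hA0 : A 0 = u := by simp [hA]
    have hB0 : B 0 = 1 - u := by simp [hB]
    have : φ 0 = 1 := by simp only [hφ, hA0, hB0]; ring
    simp [hKdef, this]
  have hKnonneg : ∀ t, 0 ≤ K t := by
    intro t
    rcases le_total 0 t with ht | ht
    · have : MonotoneOn K (Set.Ici 0) := by
        apply monotoneOn_of_deriv_nonneg (convex_Ici 0)
        · exact hdiffK.continuous.continuousOn
        · exact hdiffK.differentiableOn
        · intro t ht'
          rw [(hdK t).deriv]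
          rw [← hK'0]
          exact hK'mono (le_of_lt (by simpa using ht'))
      have := this (Set.mem_Ici.2 le_rfl) (Set.mem_Ici.2 ht) ht
      rwa [hK0] at this
    · have : AntitoneOn K (Set.Iic 0) := by
        apply antitoneOn_of_deriv_nonpos (convex_Iic 0)
        · exact hdiffK.continuous.continuousOn
        · exact hdiffK.differentiableOn
        · intro t ht'
          rw [(hdK t).deriv]
          rw [← hK'0]
          exact hK'mono (le_of_lt (by simpa using ht'))
      have := this (Set.mem_Iic.2 ht) (Set.mem_Iic.2 le_rfl) ht
      rwa [hK0] at this
  have := hKnonneg θ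
  have hlog : Real.log (φ θ) ≤ θ^2/2 := by
    simp only [hKdef] at this; linarith
  calc φ θ ≤ Real.exp (θ^2/2) := by
        rw [← Real.exp_log (hφpos θ)]
        exact Real.exp_le_exp.2 hlog


lemma hoeffding_finite {β : Type*} [Fintype β] [Nonempty β] (v : β → ℝ)
    (hv0 : ∀ a, 0 ≤ v a) (hv1 : ∑ a, v a = 1) (Z : β → ℝ) (hmean : ∑ a, v a * Z a = 0)
    (c lam : ℝ) (hrange : ∀ a b, Z a - Z b ≤ c) :
    ∑ a, v a * Real.exp (lam * Z a) ≤ Real.exp (lam^2 * c^2 / 8) := by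
  obtain ⟨aM, -, hM⟩ := Finset.exists_max_image Finset.univ Z ⟨Classical.arbitrary β, Finset.mem_univ _⟩
  obtain ⟨am, -, hm⟩ := Finset.exists_min_image Finset.univ Z ⟨Classical.arbitrary β, Finset.mem_univ _⟩
  set M := Z aM with hMdef
  set m := Z am with hmdef
  have hZle : ∀ a, Z a ≤ M := fun a => hM a (Finset.mem_univ a)
  have hZge : ∀ a, m ≤ Z a := fun a => hm a (Finset.mem_univ a)
  have hmle : m ≤ 0 := by
    have h1 : ∀ a, v a * m ≤ v a * Z a := fun a => mul_le_mul_of_nonneg_left (hZge a) (hv0 a)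
    have := Finset.sum_le_sum (s := Finset.univ) (fun a _ => h1 a)
    rw [hmean, ← Finset.sum_mul, hv1, one_mul] at this
    exact this
  have hMge : 0 ≤ M := by
    have h1 : ∀ a, v a * Z a ≤ v a * M := fun a => mul_le_mul_of_nonneg_left (hZle a) (hv0 a)
    have := Finset.sum_le_sum (s := Finset.univ) (fun a _ => h1 a)
    rw [hmean, ← Finset.sum_mul, hv1, one_mul] at this
    exact this
  have hmM : m ≤ M := le_trans hmle hMge
  have hMmc : M - m ≤ c := hrange aM am
  have hc0 : 0 ≤ c := le_trans (by linarith) hMmc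
  by_cases hlt : m < M
  case neg =>
    have hme : m = M := le_antisymm hmM (not_lt.1 hlt)
    have hm0 : m = 0 := le_antisymm hmle (hme ▸ hMge)
    have hZ0 : ∀ a, Z a = 0 := fun a =>
      le_antisymm (by rw [← hm0, hme]; exact hZle a) (hm0 ▸ hZge a)
    calc ∑ a, v a * Real.exp (lam * Z a) = ∑ a, v a := by simp [hZ0]
      _ = 1 := hv1
      _ ≤ Real.exp (lam^2 * c^2 / 8) := Real.one_le_exp (by positivity)
  case pos =>
    have hMm0 : (0:ℝ) < M - m := by linarith
    set E1 := Real.exp (lam * m) with hE1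
    set E2 := Real.exp (lam * M) with hE2
    have chord : ∀ a, Real.exp (lam * Z a) ≤ ((M - Z a) * E1 + (Z a - m) * E2)/(M - m) := by
      intro a
      have ht0 : 0 ≤ (Z a - m)/(M - m) := div_nonneg (by linarith [hZge a]) (le_of_lt hMm0)
      have ht1 : 0 ≤ (M - Z a)/(M - m) := div_nonneg (by linarith [hZle a]) (le_of_lt hMm0)
      have hts : (M - Z a)/(M - m) + (Z a - m)/(M - m) = 1 := by field_simp; ring
      have harg : lam * Z a = ((M - Z a)/(M-m)) • (lam * m) + ((Z a - m)/(M-m)) • (lam * M) := by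
        rw [smul_eq_mul, smul_eq_mul, div_mul_eq_mul_div, div_mul_eq_mul_div, ← add_div,
          eq_div_iff (ne_of_gt hMm0)]
        ring
      have := convexOn_exp.2 (Set.mem_univ (lam * m)) (Set.mem_univ (lam * M)) ht1 ht0 hts
      rw [← harg] at this
      calc Real.exp (lam * Z a) ≤ ((M - Z a)/(M-m)) * E1 + ((Z a - m)/(M-m)) * E2 := this
        _ = ((M - Z a) * E1 + (Z a - m) * E2)/(M - m) := by field_simp
    have hsum : ∑ a, v a * (((M - Z a) * E1 + (Z a - m) * E2)/(M - m))
        = (M * E1 - m * E2)/(M - m) := by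
      have pre : ∀ a ∈ Finset.univ, v a * (((M - Z a) * E1 + (Z a - m) * E2)/(M - m))
          = (v a * ((M - Z a) * E1 + (Z a - m) * E2))/(M - m) := fun a _ => by ring
      rw [Finset.sum_congr rfl pre, ← Finset.sum_div]
      congr 1
      have step : ∀ a ∈ Finset.univ, v a * ((M - Z a) * E1 + (Z a - m) * E2)
          = (v a * M - v a * Z a) * E1 + (v a * Z a - v a * m) * E2 := fun a _ => by ring
      rw [Finset.sum_congr rfl step]
      rw [Finset.sum_add_distrib]
      rw [← Finset.sum_mul, ← Finset.sum_mul]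
      rw [Finset.sum_sub_distrib, Finset.sum_sub_distrib]
      rw [← Finset.sum_mul, ← Finset.sum_mul, hmean, hv1]
      ring
    have hle1 : ∑ a, v a * Real.exp (lam * Z a) ≤ (M * E1 - m * E2)/(M - m) := by
      rw [← hsum]
      apply Finset.sum_le_sum
      intro a _
      exact mul_le_mul_of_nonneg_left (chord a) (hv0 a)
    -- apply hl_core with u = M/(M-m), θ = -lam*(M-m)/2
    set u := M/(M - m) with hu
    set θ := -(lam*(M - m)/2) with hθ
    have hu0 : 0 ≤ u := div_nonneg hMge (le_of_lt hMm0)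
    have hu1 : u ≤ 1 := by rw [hu, div_le_one hMm0]; linarith
    have harg1 : 2*(1-u)*θ = lam * m := by
      rw [hu, hθ]; field_simp; ring
    have harg2 : -(2*u)*θ = lam * M := by
      rw [hu, hθ]; field_simp
    have hcore := hl_core u hu0 hu1 θ
    rw [harg1, harg2] at hcore
    have hueq : u * E1 + (1-u) * E2 = (M * E1 - m * E2)/(M - m) := by
      rw [hu]; field_simp; ring
    rw [hueq] at hcore
    have hθsq : θ^2/2 = lam^2 * (M - m)^2/8 := by rw [hθ]; ring
    rw [hθsq] at hcore
    calc ∑ a, v a * Real.exp (lam * Z a) ≤ (M * E1 - m * E2)/(M - m) := hle1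
      _ ≤ Real.exp (lam^2 * (M-m)^2/8) := hcore
      _ ≤ Real.exp (lam^2 * c^2/8) := by
          apply Real.exp_le_exp.2
          nlinarith [sq_nonneg lam, sq_nonneg (M - m), mul_le_mul_of_nonneg_left
            (pow_le_pow_left₀ (by linarith : (0:ℝ) ≤ M - m) hMmc 2) (sq_nonneg lam)]


section Framework
variable {ι : Type*} [Fintype ι] [DecidableEq ι] {α : ι → Type*} [∀ i, Fintype (α i)]

noncomputable def ExpW (w : ∀ i, α i → ℝ) (f : (∀ i, α i) → ℝ) : ℝ :=
  ∑ x : ∀ i, α i, f x * ∏ i, w i (x i)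

variable (w : ∀ i, α i → ℝ)

lemma prodw_nonneg (hw0 : ∀ i a, 0 ≤ w i a) (x : ∀ i, α i) : 0 ≤ ∏ i, w i (x i) :=
  Finset.prod_nonneg fun i _ => hw0 i (x i)

lemma sum_prodw (hw1 : ∀ i, ∑ a, w i a = 1) : ∑ x : ∀ i, α i, ∏ i, w i (x i) = 1 := by
  classical
  rw [← Fintype.piFinset_univ, ← Finset.prod_univ_sum]
  simp [hw1]

lemma prod_split (j : ι) (g : ∀ i : ι, ℝ) :
    ∏ i, g i = g j * ∏ i : {k // k ≠ j}, g i.1 := by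
  rw [Fintype.prod_eq_mul_prod_compl j]
  congr 1
  exact (Finset.prod_subtype ({j}ᶜ) (fun i => by simp) (fun i => g i)).symm.symm

lemma ExpW_const (hw1 : ∀ i, ∑ a, w i a = 1) (c : ℝ) : ExpW w (fun _ => c) = c := by
  have h : ExpW w (fun _ => c) = c * ∑ x : ∀ i, α i, ∏ i, w i (x i) := by
    unfold ExpW; rw [Finset.mul_sum]
  rw [h, sum_prodw w hw1, mul_one]

lemma ExpW_mono (hw0 : ∀ i a, 0 ≤ w i a) {f g : (∀ i, α i) → ℝ} (h : ∀ x, f x ≤ g x) :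
    ExpW w f ≤ ExpW w g :=
  Finset.sum_le_sum fun x _ => mul_le_mul_of_nonneg_right (h x) (prodw_nonneg w hw0 x)

lemma ExpW_sum {κ : Type*} (s : Finset κ) (h : κ → (∀ i, α i) → ℝ) :
    ExpW w (fun x => ∑ k ∈ s, h k x) = ∑ k ∈ s, ExpW w (h k) := by
  unfold ExpW
  simp_rw [Finset.sum_mul]
  exact Finset.sum_comm

lemma ExpW_smul (c : ℝ) (f : (∀ i, α i) → ℝ) : ExpW w (fun x => c * f x) = c * ExpW w f := by
  unfold ExpW
  rw [Finset.mul_sum]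
  exact Finset.sum_congr rfl fun x _ => by ring

-- update/splitAt facts
lemma piSplitAt_symm_self (j : ι) (a : α j) (r : ∀ i : {k // k ≠ j}, α i) :
    (Equiv.piSplitAt j α).symm (a, r) j = a := by
  simp [Equiv.piSplitAt]

lemma piSplitAt_symm_ne (j : ι) (a : α j) (r : ∀ i : {k // k ≠ j}, α i) (i : ι) (h : i ≠ j) :
    (Equiv.piSplitAt j α).symm (a, r) i = r ⟨i, h⟩ := by
  simp [Equiv.piSplitAt, h]

lemma update_piSplitAt_symm (j : ι) (a b : α j) (r : ∀ i : {k // k ≠ j}, α i) :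
    Function.update ((Equiv.piSplitAt j α).symm (a, r)) j b = (Equiv.piSplitAt j α).symm (b, r) := by
  funext i
  by_cases h : i = j
  · subst h
    rw [Function.update_self, piSplitAt_symm_self]
  · rw [Function.update_of_ne h, piSplitAt_symm_ne j a r i h, piSplitAt_symm_ne j b r i h]

lemma ExpW_integrate_out (hw1 : ∀ i, ∑ a, w i a = 1) (j : ι) (f : (∀ i, α i) → ℝ) :
    ExpW w f = ExpW w (fun x => ∑ a, w j a * f (Function.update x j a)) := by
  classical
  unfold ExpW
  rw [← Equiv.sum_comp (Equiv.piSplitAt j α).symm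
    (fun x => f x * ∏ i, w i (x i)),
    ← Equiv.sum_comp (Equiv.piSplitAt j α).symm
    (fun x => (∑ a, w j a * f (Function.update x j a)) * ∏ i, w i (x i))]
  rw [Fintype.sum_prod_type, Fintype.sum_prod_type]
  have hprod : ∀ (a : α j) (r : ∀ i : {k // k ≠ j}, α i),
      (∏ i, w i (((Equiv.piSplitAt j α).symm (a, r)) i)) = w j a * ∏ i : {k // k ≠ j}, w i.1 (r i) := by
    intro a r
    rw [prod_split j]
    rw [piSplitAt_symm_self]
    congr 1
    exact Finset.prod_congr rfl fun i _ => by rw [piSplitAt_symm_ne j a r i.1 i.2]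
  have lhs_eq : ∀ (a : α j) (r : ∀ i : {k // k ≠ j}, α i),
      f ((Equiv.piSplitAt j α).symm (a, r)) * ∏ i, w i (((Equiv.piSplitAt j α).symm (a, r)) i)
      = w j a * (f ((Equiv.piSplitAt j α).symm (a, r)) * ∏ i : {k // k ≠ j}, w i.1 (r i)) := by
    intro a r; rw [hprod]; ring
  calc ∑ a, ∑ r, f ((Equiv.piSplitAt j α).symm (a, r)) * ∏ i, w i (((Equiv.piSplitAt j α).symm (a, r)) i)
      = ∑ a, ∑ r, w j a * (f ((Equiv.piSplitAt j α).symm (a, r)) * ∏ i : {k // k ≠ j}, w i.1 (r i)) := by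
        exact Finset.sum_congr rfl fun a _ => Finset.sum_congr rfl fun r _ => lhs_eq a r
    _ = ∑ r : ∀ i : {k // k ≠ j}, α i, (∑ a, w j a * f ((Equiv.piSplitAt j α).symm (a, r))) * ∏ i : {k // k ≠ j}, w i.1 (r i) := by
        rw [Finset.sum_comm]
        exact Finset.sum_congr rfl fun r _ => by rw [Finset.sum_mul]; exact Finset.sum_congr rfl fun a _ => by ring
    _ = ∑ a, ∑ r, (∑ b, w j b * f (Function.update ((Equiv.piSplitAt j α).symm (a, r)) j b)) * ∏ i, w i (((Equiv.piSplitAt j α).symm (a, r)) i) := by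
        rw [Finset.sum_comm]
        apply Finset.sum_congr rfl
        intro r _
        have : ∀ a : α j, (∑ b, w j b * f (Function.update ((Equiv.piSplitAt j α).symm (a, r)) j b)) * ∏ i, w i (((Equiv.piSplitAt j α).symm (a, r)) i)
            = w j a * ((∑ b, w j b * f ((Equiv.piSplitAt j α).symm (b, r))) * ∏ i : {k // k ≠ j}, w i.1 (r i)) := by
          intro a
          rw [hprod]
          have : ∀ b, Function.update ((Equiv.piSplitAt j α).symm (a, r)) j b = (Equiv.piSplitAt j α).symm (b, r) :=
            fun b => update_piSplitAt_symm j a b r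
          simp_rw [this]
          ring
        rw [Finset.sum_congr rfl fun a _ => this a, ← Finset.sum_mul, hw1 j, one_mul]
end Framework

section McD
variable {ι : Type*} [Fintype ι] [DecidableEq ι] {α : ι → Type*} [∀ i, Fintype (α i)]
  [∀ i, Nonempty (α i)] (w : ∀ i, α i → ℝ)

lemma ExpW_congr {f g : (∀ i, α i) → ℝ} (h : ∀ x, f x = g x) : ExpW w f = ExpW w g := by
  unfold ExpW; exact Finset.sum_congr rfl fun x _ => by rw [h x]

lemma ExpW_mgf (hw0 : ∀ i a, 0 ≤ w i a) (hw1 : ∀ i, ∑ a, w i a = 1)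
    (s : Finset ι) (f : (∀ i, α i) → ℝ) (c : ι → ℝ) (lam : ℝ)
    (hdep : ∀ x y : ∀ i, α i, (∀ i ∈ s, x i = y i) → f x = f y)
    (hbd : ∀ i ∈ s, ∀ (x : ∀ i, α i) (a : α i), f (Function.update x i a) - f x ≤ c i) :
    ExpW w (fun x => Real.exp (lam * (f x - ExpW w f)))
      ≤ Real.exp (lam^2 * (∑ i ∈ s, (c i)^2) / 8) := by
  classical
  induction s using Finset.induction generalizing f with
  | empty =>
    have x₀ : ∀ i, α i := Classical.arbitrary _
    have hconst : ∀ x, f x = f x₀ := fun x => hdep x x₀ (by simp)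
    have h1 : ExpW w f = f x₀ := by
      rw [ExpW_congr w hconst, ExpW_const w hw1]
    have h2 : ∀ x, Real.exp (lam * (f x - ExpW w f)) = 1 := fun x => by
      rw [h1, hconst x]; simp
    rw [ExpW_congr w h2, ExpW_const w hw1]
    simp
  | @insert j s hj ih =>
    set g : (∀ i, α i) → ℝ := fun x => ∑ a, w j a * f (Function.update x j a) with hgdef
    have hEg : ExpW w g = ExpW w f := (ExpW_integrate_out w hw1 j f).symm
    have hgdep : ∀ x y, (∀ i ∈ s, x i = y i) → g x = g y := by
      intro x y hxy
      apply Finset.sum_congr rfl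
      intro a _
      congr 1
      apply hdep
      intro i hi
      rcases Finset.mem_insert.1 hi with h | h
      · subst h; rw [Function.update_self, Function.update_self]
      · have hij : i ≠ j := fun he => hj (he ▸ h)
        rw [Function.update_of_ne hij, Function.update_of_ne hij]
        exact hxy i h
    have hgbd : ∀ i ∈ s, ∀ (x : ∀ i, α i) (a : α i),
        g (Function.update x i a) - g x ≤ c i := by
      intro i hi x a
      have hij : i ≠ j := fun he => hj (he ▸ hi)
      have step : ∀ b, w j b * f (Function.update (Function.update x i a) j b)
          - w j b * f (Function.update x j b) ≤ w j b * c i := by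
        intro b
        rw [← mul_sub]
        apply mul_le_mul_of_nonneg_left _ (hw0 j b)
        rw [Function.update_comm hij]
        exact hbd i (Finset.mem_insert_of_mem hi) (Function.update x j b) a
      calc g (Function.update x i a) - g x
          = ∑ b, (w j b * f (Function.update (Function.update x i a) j b)
              - w j b * f (Function.update x j b)) := by
            rw [Finset.sum_sub_distrib]
        _ ≤ ∑ b, w j b * c i := Finset.sum_le_sum fun b _ => step b
        _ = c i := by rw [← Finset.sum_mul, hw1 j, one_mul]
    have key : ∀ x, ∑ a, w j a * Real.exp (lam * (f (Function.update x j a) - ExpW w f))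
        ≤ Real.exp (lam^2 * (c j)^2/8) * Real.exp (lam * (g x - ExpW w f)) := by
      intro x
      have hmean : ∑ a, w j a * (f (Function.update x j a) - g x) = 0 := by
        simp_rw [mul_sub]
        rw [Finset.sum_sub_distrib, ← Finset.sum_mul, hw1 j, one_mul]
        exact sub_self _
      have hrange : ∀ a b, (f (Function.update x j a) - g x)
          - (f (Function.update x j b) - g x) ≤ c j := by
        intro a b
        have := hbd j (Finset.mem_insert_self j s) (Function.update x j b) a
        rw [Function.update_idem] at this
        linarith
      have hf := hoeffding_finite (w j) (hw0 j) (hw1 j)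
        (fun a => f (Function.update x j a) - g x) hmean (c j) lam hrange
      calc ∑ a, w j a * Real.exp (lam * (f (Function.update x j a) - ExpW w f))
          = (∑ a, w j a * Real.exp (lam * (f (Function.update x j a) - g x)))
              * Real.exp (lam * (g x - ExpW w f)) := by
            rw [Finset.sum_mul]
            apply Finset.sum_congr rfl
            intro a _
            rw [mul_assoc, ← Real.exp_add]
            congr 2
            ring
        _ ≤ Real.exp (lam^2 * (c j)^2/8) * Real.exp (lam * (g x - ExpW w f)) :=
            mul_le_mul_of_nonneg_right hf (Real.exp_nonneg _)
    calc ExpW w (fun x => Real.exp (lam * (f x - ExpW w f)))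
        = ExpW w (fun x => ∑ a, w j a * Real.exp (lam * (f (Function.update x j a) - ExpW w f))) :=
          ExpW_integrate_out w hw1 j _
      _ ≤ ExpW w (fun x => Real.exp (lam^2 * (c j)^2/8) * Real.exp (lam * (g x - ExpW w f))) :=
          ExpW_mono w hw0 key
      _ = Real.exp (lam^2 * (c j)^2/8) * ExpW w (fun x => Real.exp (lam * (g x - ExpW w g))) := by
          rw [ExpW_smul]
          congr 1
          apply ExpW_congr
          intro x
          rw [hEg]
      _ ≤ Real.exp (lam^2 * (c j)^2/8) * Real.exp (lam^2 * (∑ i ∈ s, (c i)^2) / 8) :=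
          mul_le_mul_of_nonneg_left (ih g hgdep hgbd) (Real.exp_nonneg _)
      _ = Real.exp (lam^2 * (∑ i ∈ insert j s, (c i)^2) / 8) := by
          rw [← Real.exp_add, Finset.sum_insert hj]
          congr 1
          ring

lemma mcdiarmid_tail (hw0 : ∀ i a, 0 ≤ w i a) (hw1 : ∀ i, ∑ a, w i a = 1)
    (s : Finset ι) (f : (∀ i, α i) → ℝ) (c : ι → ℝ) (t : ℝ)
    (hdep : ∀ x y : ∀ i, α i, (∀ i ∈ s, x i = y i) → f x = f y)
    (hbd : ∀ i ∈ s, ∀ (x : ∀ i, α i) (a : α i), f (Function.update x i a) - f x ≤ c i)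
    (ht : 0 ≤ t) (hC : 0 < ∑ i ∈ s, (c i)^2) :
    ExpW w (fun x => if ExpW w f + t ≤ f x then (1:ℝ) else 0)
      ≤ Real.exp (-(2 * t^2 / (∑ i ∈ s, (c i)^2))) := by
  set C := ∑ i ∈ s, (c i)^2 with hCdef
  set lam := 4 * t / C with hlam
  have hlam0 : 0 ≤ lam := by positivity
  have hpt : ∀ x, (if ExpW w f + t ≤ f x then (1:ℝ) else 0)
      ≤ Real.exp (-(lam * t)) * Real.exp (lam * (f x - ExpW w f)) := by
    intro x
    rw [← Real.exp_add]
    split_ifs with h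
    · apply Real.one_le_exp
      have : lam * t ≤ lam * (f x - ExpW w f) :=
        mul_le_mul_of_nonneg_left (by linarith) hlam0
      linarith
    · exact Real.exp_nonneg _
  calc ExpW w (fun x => if ExpW w f + t ≤ f x then (1:ℝ) else 0)
      ≤ ExpW w (fun x => Real.exp (-(lam * t)) * Real.exp (lam * (f x - ExpW w f))) :=
        ExpW_mono w hw0 hpt
    _ = Real.exp (-(lam * t)) * ExpW w (fun x => Real.exp (lam * (f x - ExpW w f))) :=
        ExpW_smul w _ _
    _ ≤ Real.exp (-(lam * t)) * Real.exp (lam^2 * C / 8) :=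
        mul_le_mul_of_nonneg_left (ExpW_mgf w hw0 hw1 s f c lam hdep hbd) (Real.exp_nonneg _)
    _ = Real.exp (lam^2 * C / 8 - lam * t) := by rw [← Real.exp_add]; congr 1; ring
    _ ≤ Real.exp (-(2 * t^2 / C)) := by
        apply Real.exp_le_exp.2
        apply le_of_eq
        rw [hlam]
        field_simp
        ring
end McD

section Moments
variable {ι : Type*} [Fintype ι] [DecidableEq ι] {α : ι → Type*} [∀ i, Fintype (α i)]
  [∀ i, Nonempty (α i)] (w : ∀ i, α i → ℝ)

lemma ExpW_single (hw1 : ∀ i, ∑ a, w i a = 1) (j : ι) (F : α j → ℝ) :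
    ExpW w (fun x => F (x j)) = ∑ a, w j a * F a := by
  rw [ExpW_integrate_out w hw1 j]
  have h : ∀ x : ∀ i, α i, (∑ a, w j a * F (Function.update x j a j)) = ∑ a, w j a * F a :=
    fun x => Finset.sum_congr rfl fun a _ => by rw [Function.update_self]
  rw [ExpW_congr w h, ExpW_const w hw1]

lemma ExpW_pair (hw1 : ∀ i, ∑ a, w i a = 1) (j j' : ι) (hjj : j ≠ j')
    (F : α j → ℝ) (G : α j' → ℝ) :
    ExpW w (fun x => F (x j) * G (x j')) = (∑ a, w j a * F a) * (∑ b, w j' b * G b) := by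
  rw [ExpW_integrate_out w hw1 j]
  have h : ∀ x : ∀ i, α i,
      (∑ a, w j a * (F (Function.update x j a j) * G (Function.update x j a j')))
      = (∑ a, w j a * F a) * G (x j') := by
    intro x
    rw [Finset.sum_mul]
    apply Finset.sum_congr rfl
    intro a _
    rw [Function.update_self, Function.update_of_ne (Ne.symm hjj)]
    ring
  rw [ExpW_congr w h, ExpW_smul, ExpW_single w hw1 j' G]

lemma ExpW_nonneg (hw0 : ∀ i a, 0 ≤ w i a) {f : (∀ i, α i) → ℝ} (hf : ∀ x, 0 ≤ f x) :
    0 ≤ ExpW w f :=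
  Finset.sum_nonneg fun x _ => mul_nonneg (hf x) (prodw_nonneg w hw0 x)

lemma ExpW_abs_le_sqrt (hw0 : ∀ i a, 0 ≤ w i a) (hw1 : ∀ i, ∑ a, w i a = 1)
    (g : (∀ i, α i) → ℝ) :
    ExpW w (fun x => |g x|) ≤ Real.sqrt (ExpW w (fun x => (g x)^2)) := by
  have hnn : 0 ≤ ExpW w (fun x => (g x)^2) := ExpW_nonneg w hw0 fun x => sq_nonneg _
  rw [Real.le_sqrt (ExpW_nonneg w hw0 fun x => abs_nonneg _) hnn]
  have hcs := Finset.sum_mul_sq_le_sq_mul_sq Finset.univ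
    (fun x : ∀ i, α i => |g x| * Real.sqrt (∏ i, w i (x i)))
    (fun x : ∀ i, α i => Real.sqrt (∏ i, w i (x i)))
  have e1 : ∀ x : ∀ i, α i, (|g x| * Real.sqrt (∏ i, w i (x i))) * Real.sqrt (∏ i, w i (x i))
      = |g x| * ∏ i, w i (x i) := fun x => by
    rw [mul_assoc, Real.mul_self_sqrt (prodw_nonneg w hw0 x)]
  have e2 : ∀ x : ∀ i, α i, (|g x| * Real.sqrt (∏ i, w i (x i)))^2
      = (g x)^2 * ∏ i, w i (x i) := fun x => by
    rw [mul_pow, Real.sq_sqrt (prodw_nonneg w hw0 x), sq_abs]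
  have e3 : ∀ x : ∀ i, α i, (Real.sqrt (∏ i, w i (x i)))^2 = ∏ i, w i (x i) := fun x =>
    Real.sq_sqrt (prodw_nonneg w hw0 x)
  rw [Finset.sum_congr rfl fun x _ => e1 x, Finset.sum_congr rfl fun x _ => e2 x,
    Finset.sum_congr rfl fun x _ => e3 x, sum_prodw w hw1, mul_one] at hcs
  exact hcs
end Moments






open Finset


section RixLemmas
variable {d : ℕ} {m : Fin d → ℕ} {𝕊 : Finset (Finset (Fin d))}

/-- distance functional -/
noncomputable def DistF (m : Fin d → ℕ) (𝕊 : Finset (Finset (Fin d)))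
    (p q : ∀ S : Finset (Fin d), Cell m S → ℝ) : ℝ :=
  ∑ S ∈ 𝕊, (1/2) * ∑ y, |p S y - q S y|

lemma DistF_nonneg (p q : ∀ S : Finset (Fin d), Cell m S → ℝ) : 0 ≤ DistF m 𝕊 p q :=
  Finset.sum_nonneg fun S _ => mul_nonneg (by norm_num)
    (Finset.sum_nonneg fun y _ => abs_nonneg _)

lemma DistF_comm (p q : ∀ S : Finset (Fin d), Cell m S → ℝ) : DistF m 𝕊 p q = DistF m 𝕊 q p := by
  unfold DistF
  exact Finset.sum_congr rfl fun S _ => by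
    congr 1
    exact Finset.sum_congr rfl fun y _ => abs_sub_comm _ _

lemma GPlus_zero : GPlus m 𝕊 (fun _ _ => 0) :=
  ⟨fun _ _ _ => by norm_num, fun x => by simp⟩

lemma RL_zero (p : ∀ S : Finset (Fin d), Cell m S → ℝ) : RL m 𝕊 p (fun _ _ => 0) = 0 := by
  unfold RL; simp

lemma RL_le_one (hp : IsFamily m 𝕊 p) {f : ∀ S : Finset (Fin d), Cell m S → ℝ}
    (hf : ∀ S ∈ 𝕊, ∀ y, -1 ≤ f S y) (h𝕊 : 𝕊.Nonempty) : RL m 𝕊 p f ≤ 1 := by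
  unfold RL
  have hM : (0:ℝ) < (𝕊.card : ℝ) := by
    exact_mod_cast Finset.card_pos.2 h𝕊
  have hS : ∀ S ∈ 𝕊, (-1 : ℝ) ≤ ∑ y, f S y * p S y := by
    intro S hS
    have : ∀ y, -(p S y) ≤ f S y * p S y := fun y => by
      have := mul_le_mul_of_nonneg_right (hf S hS y) ((hp S hS).1 y)
      linarith [this]
    calc (-1 : ℝ) = ∑ y, -(p S y) := by
          rw [Finset.sum_neg_distrib, (hp S hS).2]
      _ ≤ _ := Finset.sum_le_sum fun y _ => this y
  have hsum : -(𝕊.card : ℝ) ≤ ∑ S ∈ 𝕊, ∑ y, f S y * p S y := by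
    calc -(𝕊.card : ℝ) = ∑ S ∈ 𝕊, (-1 : ℝ) := by
          rw [Finset.sum_const]
          simp
      _ ≤ _ := Finset.sum_le_sum hS
  have key : 1 / (𝕊.card : ℝ) * (-(𝕊.card : ℝ)) ≤ 1 / (𝕊.card : ℝ) * ∑ S ∈ 𝕊, ∑ y, f S y * p S y :=
    mul_le_mul_of_nonneg_left hsum (by positivity)
  have e : 1 / (𝕊.card : ℝ) * (-(𝕊.card : ℝ)) = -1 := by field_simp
  rw [e] at key
  linarith

lemma Rix_bddAbove (hp : IsFamily m 𝕊 p) (h𝕊 : 𝕊.Nonempty) :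
    BddAbove {t | ∃ f, GPlus m 𝕊 f ∧ t = RL m 𝕊 p f} :=
  ⟨1, fun t ⟨f, hf, ht⟩ => ht ▸ RL_le_one hp hf.1 h𝕊⟩

lemma Rix_nonneg (hp : IsFamily m 𝕊 p) (h𝕊 : 𝕊.Nonempty) : 0 ≤ Rix m 𝕊 p := by
  have h0 : (0:ℝ) ∈ {t | ∃ f, GPlus m 𝕊 f ∧ t = RL m 𝕊 p f} :=
    ⟨fun _ _ => 0, GPlus_zero, (RL_zero p).symm⟩
  exact le_csSup (Rix_bddAbove hp h𝕊) h0

/-- truncated functional family -/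
noncomputable def trunc (𝕊 : Finset (Finset (Fin d))) (f : ∀ S : Finset (Fin d), Cell m S → ℝ) :
    ∀ S : Finset (Fin d), Cell m S → ℝ :=
  fun S y => min (f S y) ((𝕊.card : ℝ) - 1)

lemma trunc_mem (h𝕊 : 𝕊.Nonempty) {f : ∀ S : Finset (Fin d), Cell m S → ℝ}
    (hf : GPlus m 𝕊 f) : GPlus m 𝕊 (trunc 𝕊 f) := by
  have hM1 : (1:ℝ) ≤ (𝕊.card : ℝ) := by exact_mod_cast Finset.card_pos.2 h𝕊
  constructor
  · intro S hS y
    exact le_min (hf.1 S hS y) (by linarith)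
  · intro x
    by_cases hall : ∀ S ∈ 𝕊, f S (proj m S x) ≤ (𝕊.card : ℝ) - 1
    · have : ∀ S ∈ 𝕊, trunc 𝕊 f S (proj m S x) = f S (proj m S x) := fun S hS =>
        min_eq_left (hall S hS)
      rw [Finset.sum_congr rfl this]
      exact hf.2 x
    · push_neg at hall
      obtain ⟨S₀, hS₀, hgt⟩ := hall
      rw [← Finset.add_sum_erase _ _ hS₀]
      have h1 : trunc 𝕊 f S₀ (proj m S₀ x) = (𝕊.card : ℝ) - 1 := min_eq_right (le_of_lt hgt)
      have h2 : -((𝕊.erase S₀).card : ℝ) ≤ ∑ S ∈ 𝕊.erase S₀, trunc 𝕊 f S (proj m S x) := by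
        calc -((𝕊.erase S₀).card : ℝ) = ∑ S ∈ 𝕊.erase S₀, (-1 : ℝ) := by
              rw [Finset.sum_const]; simp
          _ ≤ _ := Finset.sum_le_sum fun S hS =>
              le_min (hf.1 S (Finset.mem_of_mem_erase hS) _) (by linarith)
      have h3 : ((𝕊.erase S₀).card : ℝ) = (𝕊.card : ℝ) - 1 := by
        rw [Finset.card_erase_of_mem hS₀]
        have : 1 ≤ 𝕊.card := Finset.card_pos.2 h𝕊
        push_cast [Nat.cast_sub this]
        ring
      rw [h1]
      rw [h3] at h2
      linarith

lemma RL_trunc_le (hp : IsFamily m 𝕊 p) (f : ∀ S : Finset (Fin d), Cell m S → ℝ) :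
    RL m 𝕊 p f ≤ RL m 𝕊 p (trunc 𝕊 f) := by
  unfold RL
  rw [neg_mul, neg_mul, neg_le_neg_iff]
  apply mul_le_mul_of_nonneg_left _ (by positivity)
  apply Finset.sum_le_sum
  intro S hS
  apply Finset.sum_le_sum
  intro y _
  exact mul_le_mul_of_nonneg_right (min_le_left _ _) ((hp S hS).1 y)

lemma RL_lipschitz (h𝕊 : 𝕊.Nonempty)
    {p q : ∀ S : Finset (Fin d), Cell m S → ℝ}
    (hp : IsFamily m 𝕊 p) (hq : IsFamily m 𝕊 q)
    {f : ∀ S : Finset (Fin d), Cell m S → ℝ}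
    (hf1 : ∀ S ∈ 𝕊, ∀ y, -1 ≤ f S y) (hf2 : ∀ S ∈ 𝕊, ∀ y, f S y ≤ (𝕊.card : ℝ) - 1) :
    RL m 𝕊 p f ≤ RL m 𝕊 q f + DistF m 𝕊 p q := by
  have hM : (0:ℝ) < (𝕊.card : ℝ) := by exact_mod_cast Finset.card_pos.2 h𝕊
  set M := (𝕊.card : ℝ) with hMdef
  have key : ∀ S ∈ 𝕊, ∑ y, f S y * q S y - ∑ y, f S y * p S y
      ≤ (M/2) * ∑ y, |p S y - q S y| := by
    intro S hS
    have hzero : ∑ y, (q S y - p S y) = 0 := by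
      rw [Finset.sum_sub_distrib, (hq S hS).2, (hp S hS).2, sub_self]
    have step1 : ∑ y, f S y * q S y - ∑ y, f S y * p S y
        = ∑ y, (f S y - (M - 2)/2) * (q S y - p S y) := by
      have expand : ∀ y, (f S y - (M - 2)/2) * (q S y - p S y)
          = (f S y * q S y - f S y * p S y) - ((M-2)/2) * (q S y - p S y) := fun y => by ring
      rw [Finset.sum_congr rfl fun y _ => expand y, Finset.sum_sub_distrib,
        Finset.sum_sub_distrib, ← Finset.mul_sum, hzero]
      ring
    rw [step1, Finset.mul_sum]
    apply Finset.sum_le_sum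
    intro y _
    have habs : |f S y - (M - 2)/2| ≤ M/2 := by
      rw [abs_le]
      constructor
      · have := hf1 S hS y; linarith
      · have := hf2 S hS y; linarith
    calc (f S y - (M - 2)/2) * (q S y - p S y)
        ≤ |(f S y - (M - 2)/2) * (q S y - p S y)| := le_abs_self _
      _ = |f S y - (M - 2)/2| * |q S y - p S y| := abs_mul _ _
      _ ≤ (M/2) * |q S y - p S y| := by
          apply mul_le_mul_of_nonneg_right habs (abs_nonneg _)
      _ = (M/2) * |p S y - q S y| := by rw [abs_sub_comm]
  have main : ∑ S ∈ 𝕊, ∑ y, f S y * q S y - ∑ S ∈ 𝕊, ∑ y, f S y * p S y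
      ≤ M * DistF m 𝕊 p q := by
    rw [← Finset.sum_sub_distrib]
    unfold DistF
    rw [Finset.mul_sum]
    apply Finset.sum_le_sum
    intro S hS
    calc ∑ y, f S y * q S y - ∑ y, f S y * p S y ≤ (M/2) * ∑ y, |p S y - q S y| := key S hS
      _ = M * ((1/2) * ∑ y, |p S y - q S y|) := by ring
  unfold RL
  have expand : -(1/M) * ∑ S ∈ 𝕊, ∑ y, f S y * p S y
      - (-(1/M) * ∑ S ∈ 𝕊, ∑ y, f S y * q S y)
      = (1/M) * (∑ S ∈ 𝕊, ∑ y, f S y * q S y - ∑ S ∈ 𝕊, ∑ y, f S y * p S y) := by ring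
  have h2 : (1/M) * (∑ S ∈ 𝕊, ∑ y, f S y * q S y - ∑ S ∈ 𝕊, ∑ y, f S y * p S y)
      ≤ (1/M) * (M * DistF m 𝕊 p q) := mul_le_mul_of_nonneg_left main (by positivity)
  have h3 : (1/M) * (M * DistF m 𝕊 p q) = DistF m 𝕊 p q := by field_simp
  rw [h3] at h2
  rw [← hMdef]
  linarith [expand, h2]

lemma RL_nonpos_of_compatible (h𝕊 : 𝕊.Nonempty)
    {q : ∀ S : Finset (Fin d), Cell m S → ℝ} (hq : Compatible m 𝕊 q)
    {f : ∀ S : Finset (Fin d), Cell m S → ℝ} (hf : GPlus m 𝕊 f) :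
    RL m 𝕊 q f ≤ 0 := by
  obtain ⟨r, hr, hmarg⟩ := hq
  have key : ∀ S ∈ 𝕊, ∑ y, f S y * q S y = ∑ x : Full m, f S (proj m S x) * r x := by
    intro S hS
    calc ∑ y, f S y * q S y
        = ∑ y, ∑ x : Full m, (if proj m S x = y then f S y * r x else 0) := by
          apply Finset.sum_congr rfl
          intro y _
          rw [hmarg S hS y, Finset.mul_sum]
          apply Finset.sum_congr rfl
          intro x _
          rw [mul_ite, mul_zero]
      _ = ∑ x : Full m, ∑ y, (if proj m S x = y then f S y * r x else 0) := Finset.sum_comm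
      _ = ∑ x : Full m, f S (proj m S x) * r x := by
          apply Finset.sum_congr rfl
          intro x _
          rw [Finset.sum_ite_eq]
          simp
  have main : 0 ≤ ∑ S ∈ 𝕊, ∑ y, f S y * q S y := by
    rw [Finset.sum_congr rfl key, Finset.sum_comm]
    apply Finset.sum_nonneg
    intro x _
    rw [← Finset.sum_mul]
    exact mul_nonneg (hf.2 x) (hr.1 x)
  unfold RL
  have hM : (0:ℝ) < (𝕊.card : ℝ) := by exact_mod_cast Finset.card_pos.2 h𝕊
  have h4 : 0 ≤ 1 / (𝕊.card:ℝ) * ∑ S ∈ 𝕊, ∑ y, f S y * q S y :=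
    mul_nonneg (by positivity) main
  linarith

lemma Rix_le_DistF_of_compatible (h𝕊 : 𝕊.Nonempty)
    {p q : ∀ S : Finset (Fin d), Cell m S → ℝ}
    (hp : IsFamily m 𝕊 p) (hpc : Compatible m 𝕊 p) (hq : IsFamily m 𝕊 q) :
    Rix m 𝕊 q ≤ DistF m 𝕊 q p := by
  apply Real.sSup_le _ (DistF_nonneg q p)
  rintro t ⟨f, hf, rfl⟩
  have hM1 : (1:ℝ) ≤ (𝕊.card : ℝ) := by exact_mod_cast Finset.card_pos.2 h𝕊
  have htr := trunc_mem h𝕊 hf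
  calc RL m 𝕊 q f ≤ RL m 𝕊 q (trunc 𝕊 f) := RL_trunc_le hq f
    _ ≤ RL m 𝕊 p (trunc 𝕊 f) + DistF m 𝕊 q p :=
        RL_lipschitz h𝕊 hq hp htr.1 (fun S hS y => min_le_right _ _)
    _ ≤ 0 + DistF m 𝕊 q p := by
        have := RL_nonpos_of_compatible h𝕊 hpc htr
        linarith
    _ = DistF m 𝕊 q p := by ring

lemma Rix_le_Rix_add_DistF (h𝕊 : 𝕊.Nonempty)
    {p q : ∀ S : Finset (Fin d), Cell m S → ℝ}
    (hp : IsFamily m 𝕊 p) (hq : IsFamily m 𝕊 q) :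
    Rix m 𝕊 p ≤ Rix m 𝕊 q + DistF m 𝕊 p q := by
  apply Real.sSup_le
  · rintro t ⟨f, hf, rfl⟩
    have htr := trunc_mem h𝕊 hf
    calc RL m 𝕊 p f ≤ RL m 𝕊 p (trunc 𝕊 f) := RL_trunc_le hp f
      _ ≤ RL m 𝕊 q (trunc 𝕊 f) + DistF m 𝕊 p q :=
          RL_lipschitz h𝕊 hp hq htr.1 (fun S hS y => min_le_right _ _)
      _ ≤ Rix m 𝕊 q + DistF m 𝕊 p q := by
          have : RL m 𝕊 q (trunc 𝕊 f) ≤ Rix m 𝕊 q :=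
            le_csSup (Rix_bddAbove hq h𝕊) ⟨trunc 𝕊 f, htr, rfl⟩
          linarith
  · have := Rix_nonneg hq h𝕊
    have := DistF_nonneg (𝕊 := 𝕊) p q
    linarith
end RixLemmas

section Stat
variable {d : ℕ}

/-- index type for the individual samples -/
abbrev Idx (𝕊 : Finset (Finset (Fin d))) (n : Finset (Fin d) → ℕ) : Type :=
  Σ S : {T : Finset (Fin d) // T ∈ 𝕊}, Fin (n S.1)

variable (m : Fin d → ℕ) (𝕊 : Finset (Finset (Fin d))) (n : Finset (Fin d) → ℕ)

/-- weights -/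
noncomputable def WW (p : ∀ S : Finset (Fin d), Cell m S → ℝ) :
    ∀ z : Idx 𝕊 n, Cell m z.1.1 → ℝ := fun z => p z.1.1

/-- the currying equivalence -/
def EE : (∀ z : Idx 𝕊 n, Cell m z.1.1) ≃ Samples m 𝕊 n :=
  Equiv.piCurry (fun (S : {T : Finset (Fin d) // T ∈ 𝕊}) (_ : Fin (n S.1)) => Cell m S.1)

lemma EE_apply (x : ∀ z : Idx 𝕊 n, Cell m z.1.1) (S : {T : Finset (Fin d) // T ∈ 𝕊})
    (i : Fin (n S.1)) : EE m 𝕊 n x S i = x ⟨S, i⟩ := rfl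

lemma jointMass_EE (p : ∀ S : Finset (Fin d), Cell m S → ℝ) (x : ∀ z : Idx 𝕊 n, Cell m z.1.1) :
    jointMass m 𝕊 n p (EE m 𝕊 n x) = ∏ z : Idx 𝕊 n, WW m 𝕊 n p z (x z) := by
  unfold jointMass
  rw [← Finset.univ_sigma_univ, Finset.prod_sigma]
  rfl

lemma bridge (p : ∀ S : Finset (Fin d), Cell m S → ℝ) (G : Samples m 𝕊 n → ℝ) :
    ∑ ω : Samples m 𝕊 n, G ω * jointMass m 𝕊 n p ω
      = ExpW (WW m 𝕊 n p) (fun x => G (EE m 𝕊 n x)) := by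
  unfold ExpW
  rw [← Equiv.sum_comp (EE m 𝕊 n) (fun ω => G ω * jointMass m 𝕊 n p ω)]
  apply Finset.sum_congr rfl
  intro x _
  rw [jointMass_EE]

lemma expTest_eq_ExpW (p : ∀ S : Finset (Fin d), Cell m S → ℝ) (ψ : Samples m 𝕊 n → ℝ) :
    expTest m 𝕊 n p ψ = ExpW (WW m 𝕊 n p) (fun x => ψ (EE m 𝕊 n x)) :=
  bridge m 𝕊 n p ψ

lemma WW_w0 {p : ∀ S : Finset (Fin d), Cell m S → ℝ} (hp : IsFamily m 𝕊 p) :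
    ∀ (z : Idx 𝕊 n) a, 0 ≤ WW m 𝕊 n p z a := fun z a => (hp z.1.1 z.1.2).1 a

lemma WW_w1 {p : ∀ S : Finset (Fin d), Cell m S → ℝ} (hp : IsFamily m 𝕊 p) :
    ∀ (z : Idx 𝕊 n), ∑ a, WW m 𝕊 n p z a = 1 := fun z => (hp z.1.1 z.1.2).2

/-- the empirical family with zero base -/
noncomputable def empZ (ω : Samples m 𝕊 n) : ∀ S : Finset (Fin d), Cell m S → ℝ :=
  emp m 𝕊 n (fun _ _ => 0) ω

lemma empZ_apply (ω : Samples m 𝕊 n) {S : Finset (Fin d)} (hS : S ∈ 𝕊) (y : Cell m S) :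
    empZ m 𝕊 n ω S y
      = (n S : ℝ)⁻¹ * ((Finset.univ.filter fun i => ω ⟨S, hS⟩ i = y).card : ℝ) := by
  unfold empZ emp
  rw [dif_pos hS]

lemma count_sum (ω : Samples m 𝕊 n) {S : Finset (Fin d)} (hS : S ∈ 𝕊) :
    ∑ y : Cell m S, ((Finset.univ.filter fun i => ω ⟨S, hS⟩ i = y).card : ℝ) = (n S : ℝ) := by
  rw [← Nat.cast_sum]
  congr 1
  rw [← Finset.card_eq_sum_card_fiberwise (f := fun i => ω ⟨S, hS⟩ i) (t := Finset.univ)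
    (fun i _ => Finset.mem_univ _)]
  simp

lemma empZ_isFamily (ω : Samples m 𝕊 n) (hn : ∀ S ∈ 𝕊, 0 < n S) :
    IsFamily m 𝕊 (empZ m 𝕊 n ω) := by
  intro S hS
  constructor
  · intro y
    rw [empZ_apply m 𝕊 n ω hS y]
    positivity
  · rw [Finset.sum_congr rfl fun y _ => empZ_apply m 𝕊 n ω hS y, ← Finset.mul_sum,
      count_sum m 𝕊 n ω hS]
    have : (n S : ℝ) ≠ 0 := by
      have := hn S hS; positivity
    field_simp
end Stat

section Moments2
variable {d : ℕ} (m : Fin d → ℕ) (𝕊 : Finset (Finset (Fin d))) (n : Finset (Fin d) → ℕ)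

lemma chi_single {κ : Type*} [Fintype κ] [DecidableEq κ] (q : κ → ℝ) (hq : ∑ a, q a = 1)
    (y : κ) : ∑ a, q a * ((if a = y then (1:ℝ) else 0) - q y) = 0 := by
  have h : ∀ a, q a * ((if a = y then (1:ℝ) else 0) - q y)
      = (if a = y then q a else 0) - q a * q y := fun a => by
    by_cases h : a = y <;> simp [h] <;> ring
  rw [Finset.sum_congr rfl fun a _ => h a, Finset.sum_sub_distrib,
    Finset.sum_ite_eq' Finset.univ y q, ← Finset.sum_mul, hq]
  simp

lemma chi_sq {κ : Type*} [Fintype κ] [DecidableEq κ] (q : κ → ℝ) (hq : ∑ a, q a = 1)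
    (y : κ) : ∑ a, q a * ((if a = y then (1:ℝ) else 0) - q y)^2 = q y * (1 - q y) := by
  have h : ∀ a, q a * ((if a = y then (1:ℝ) else 0) - q y)^2
      = (if a = y then q a else 0) * (1 - 2 * q y) + q a * (q y)^2 := fun a => by
    by_cases h : a = y <;> simp [h] <;> ring
  rw [Finset.sum_congr rfl fun a _ => h a, Finset.sum_add_distrib, ← Finset.sum_mul,
    Finset.sum_ite_eq' Finset.univ y q, ← Finset.sum_mul, hq]
  simp
  ring

lemma hemp (hm : ∀ j, 0 < m j) (hn : ∀ S ∈ 𝕊, 0 < n S)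
    {p : ∀ S : Finset (Fin d), Cell m S → ℝ}
    {S₀ : Finset (Fin d)} (hS₀ : S₀ ∈ 𝕊) (y : Cell m S₀) (x : ∀ z : Idx 𝕊 n, Cell m z.1.1) :
    empZ m 𝕊 n (EE m 𝕊 n x) S₀ y - p S₀ y
      = (n S₀ : ℝ)⁻¹ * ∑ i : Fin (n S₀),
          ((if x ⟨⟨S₀, hS₀⟩, i⟩ = y then (1:ℝ) else 0) - p S₀ y) := by
  have hne : (n S₀ : ℝ) ≠ 0 := by have := hn S₀ hS₀; positivity
  rw [empZ_apply m 𝕊 n _ hS₀ y]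
  have hcnt : ((Finset.univ.filter fun i => EE m 𝕊 n x ⟨S₀, hS₀⟩ i = y).card : ℝ)
      = ∑ i : Fin (n S₀), (if x ⟨⟨S₀, hS₀⟩, i⟩ = y then (1:ℝ) else 0) := by
    rw [Finset.card_filter]
    push_cast
    rfl
  rw [hcnt, Finset.sum_sub_distrib, Finset.sum_const, mul_sub]
  simp only [Finset.card_univ, Fintype.card_fin, nsmul_eq_mul]
  field_simp

lemma evar (hm : ∀ j, 0 < m j) (hn : ∀ S ∈ 𝕊, 0 < n S)
    {p : ∀ S : Finset (Fin d), Cell m S → ℝ} (hp : IsFamily m 𝕊 p)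
    {S₀ : Finset (Fin d)} (hS₀ : S₀ ∈ 𝕊) (y : Cell m S₀) :
    ExpW (WW m 𝕊 n p) (fun x => (empZ m 𝕊 n (EE m 𝕊 n x) S₀ y - p S₀ y)^2)
      = p S₀ y * (1 - p S₀ y) / (n S₀ : ℝ) := by
  haveI : ∀ z : Idx 𝕊 n, Nonempty (Cell m z.1.1) := fun z => ⟨fun j => ⟨0, hm j.1⟩⟩
  have hne : (n S₀ : ℝ) ≠ 0 := by have := hn S₀ hS₀; positivity
  set F : Cell m S₀ → ℝ := fun a => (if a = y then (1:ℝ) else 0) - p S₀ y with hF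
  set zz : Fin (n S₀) → Idx 𝕊 n := fun i => ⟨⟨S₀, hS₀⟩, i⟩ with hzz
  have key : ∀ x : ∀ z : Idx 𝕊 n, Cell m z.1.1,
      (empZ m 𝕊 n (EE m 𝕊 n x) S₀ y - p S₀ y)^2
      = ((n S₀ : ℝ)⁻¹)^2 * ∑ i : Fin (n S₀), ∑ j : Fin (n S₀), F (x (zz i)) * F (x (zz j)) := by
    intro x
    rw [hemp m 𝕊 n hm hn hS₀ y x]
    have hr : ∀ (c s : ℝ), (c * s)^2 = c^2 * (s * s) := fun c s => by ring
    rw [hr, Finset.sum_mul_sum]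
  rw [ExpW_congr _ key, ExpW_smul, ExpW_sum]
  have inner : ∀ i : Fin (n S₀), ExpW (WW m 𝕊 n p) (fun x => ∑ j, F (x (zz i)) * F (x (zz j)))
      = p S₀ y * (1 - p S₀ y) := by
    intro i
    rw [ExpW_sum]
    have term : ∀ j : Fin (n S₀), ExpW (WW m 𝕊 n p) (fun x => F (x (zz i)) * F (x (zz j)))
        = if i = j then p S₀ y * (1 - p S₀ y) else 0 := by
      intro j
      by_cases hij : i = j
      · subst hij
        rw [if_pos rfl]
        calc ExpW (WW m 𝕊 n p) (fun x => F (x (zz i)) * F (x (zz i)))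
            = ∑ a, WW m 𝕊 n p (zz i) a * (F a * F a) :=
              ExpW_single (WW m 𝕊 n p) (WW_w1 m 𝕊 n hp) (zz i) (fun a => F a * F a)
          _ = ∑ a, p S₀ a * ((if a = y then (1:ℝ) else 0) - p S₀ y)^2 :=
              Finset.sum_congr rfl fun a _ => by
                show p S₀ a * (F a * F a) = _
                simp only [hF]
                ring
          _ = p S₀ y * (1 - p S₀ y) := chi_sq (p S₀) (hp S₀ hS₀).2 y
      · rw [if_neg hij]
        have hzzne : zz i ≠ zz j := by
          intro h
          apply hij
          exact eq_of_heq (Sigma.mk.inj_iff.1 h).2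
        rw [ExpW_pair (WW m 𝕊 n p) (WW_w1 m 𝕊 n hp) (zz i) (zz j) hzzne F F]
        have h0 : (∑ a, WW m 𝕊 n p (zz i) a * F a) = 0 := by
          calc (∑ a, WW m 𝕊 n p (zz i) a * F a)
              = ∑ a, p S₀ a * ((if a = y then (1:ℝ) else 0) - p S₀ y) :=
                Finset.sum_congr rfl fun a _ => by
                  show p S₀ a * F a = _
                  simp only [hF]
            _ = 0 := chi_single (p S₀) (hp S₀ hS₀).2 y
        rw [h0, zero_mul]
    rw [Finset.sum_congr rfl fun j _ => term j]
    rw [Finset.sum_ite_eq Finset.univ i (fun _ => p S₀ y * (1 - p S₀ y))]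
    simp
  rw [Finset.sum_congr rfl fun i _ => inner i, Finset.sum_const]
  simp only [Finset.card_univ, Fintype.card_fin, nsmul_eq_mul]
  field_simp
end Moments2

section ETbound
variable {d : ℕ} (m : Fin d → ℕ) (𝕊 : Finset (Finset (Fin d))) (n : Finset (Fin d) → ℕ)

lemma pmf_sum_sqrt {κ : Type*} [Fintype κ] [Nonempty κ] (q : κ → ℝ)
    (h0 : ∀ a, 0 ≤ q a) (h1 : ∑ a, q a = 1) (nn : ℝ) (hnn : 0 < nn) :
    ∑ y, Real.sqrt (q y * (1 - q y) / nn) ≤ Real.sqrt (((Fintype.card κ : ℝ) - 1) / nn) := by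
  set k := (Fintype.card κ : ℝ) with hk
  have hk0 : (0:ℝ) < k := by
    rw [hk]; exact_mod_cast Fintype.card_pos
  have hq1 : ∀ y, q y ≤ 1 := fun y => h1 ▸ Finset.single_le_sum (fun a _ => h0 a) (Finset.mem_univ y)
  have hval : ∀ y, (0:ℝ) ≤ q y * (1 - q y) / nn := fun y => by
    have := h0 y; have := hq1 y
    have h2 : 0 ≤ q y * (1 - q y) := mul_nonneg (h0 y) (by linarith)
    positivity
  have cs1 : (∑ y, Real.sqrt (q y * (1 - q y) / nn))^2
      ≤ (∑ y, q y * (1 - q y) / nn) * k := by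
    have := Finset.sum_mul_sq_le_sq_mul_sq Finset.univ
      (fun y : κ => Real.sqrt (q y * (1 - q y) / nn)) (fun _ => (1:ℝ))
    simp only [mul_one, one_pow] at this
    calc (∑ y, Real.sqrt (q y * (1 - q y) / nn))^2
        ≤ (∑ y, (Real.sqrt (q y * (1 - q y) / nn))^2) * (∑ _y : κ, (1:ℝ)) := this
      _ = (∑ y, q y * (1 - q y) / nn) * k := by
          rw [Finset.sum_congr rfl fun y _ => Real.sq_sqrt (hval y)]
          congr 1
          rw [Finset.sum_const]
          simp [hk]
  have cs2 : (1:ℝ) ≤ (∑ y, (q y)^2) * k := by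
    have := Finset.sum_mul_sq_le_sq_mul_sq Finset.univ (fun y : κ => q y) (fun _ => (1:ℝ))
    simp only [mul_one, one_pow] at this
    rw [h1] at this
    calc (1:ℝ) = 1^2 := by norm_num
      _ ≤ (∑ y, (q y)^2) * (∑ _y : κ, (1:ℝ)) := this
      _ = (∑ y, (q y)^2) * k := by
          congr 1
          rw [Finset.sum_const]
          simp [hk]
  have hsum : ∑ y, q y * (1 - q y) / nn = (1 - ∑ y, (q y)^2) / nn := by
    rw [← Finset.sum_div]
    congr 1
    have : ∀ y, q y * (1 - q y) = q y - (q y)^2 := fun y => by ring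
    rw [Finset.sum_congr rfl fun y _ => this y, Finset.sum_sub_distrib, h1]
  have key : (∑ y, Real.sqrt (q y * (1 - q y) / nn))^2 ≤ (k - 1) / nn := by
    calc (∑ y, Real.sqrt (q y * (1 - q y) / nn))^2
        ≤ (∑ y, q y * (1 - q y) / nn) * k := cs1
      _ = (1 - ∑ y, (q y)^2) * k / nn := by rw [hsum]; ring
      _ ≤ (k - 1) / nn := by
          apply div_le_div_of_nonneg_right _ hnn.le
          nlinarith [cs2]
  have hk1 : (1:ℝ) ≤ k := by rw [hk]; exact_mod_cast Fintype.card_pos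
  rw [Real.le_sqrt (Finset.sum_nonneg fun y _ => Real.sqrt_nonneg _)
    (div_nonneg (by linarith) hnn.le)]
  exact key

lemma ET_bound (hm : ∀ j, 0 < m j) (hn : ∀ S ∈ 𝕊, 0 < n S)
    {p : ∀ S : Finset (Fin d), Cell m S → ℝ} (hp : IsFamily m 𝕊 p) :
    ExpW (WW m 𝕊 n p) (fun x => DistF m 𝕊 (empZ m 𝕊 n (EE m 𝕊 n x)) p)
      ≤ (1/2) * ∑ S ∈ 𝕊, Real.sqrt (((Fintype.card (Cell m S) : ℝ) - 1) / (n S : ℝ)) := by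
  haveI : ∀ z : Idx 𝕊 n, Nonempty (Cell m z.1.1) := fun z => ⟨fun j => ⟨0, hm j.1⟩⟩
  have hexp : ExpW (WW m 𝕊 n p) (fun x => DistF m 𝕊 (empZ m 𝕊 n (EE m 𝕊 n x)) p)
      = ∑ S ∈ 𝕊, (1/2) * ∑ y, ExpW (WW m 𝕊 n p)
          (fun x => |empZ m 𝕊 n (EE m 𝕊 n x) S y - p S y|) := by
    rw [show (fun x => DistF m 𝕊 (empZ m 𝕊 n (EE m 𝕊 n x)) p)
        = (fun x => ∑ S ∈ 𝕊, (1/2) * ∑ y, |empZ m 𝕊 n (EE m 𝕊 n x) S y - p S y|) from rfl]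
    rw [ExpW_sum]
    apply Finset.sum_congr rfl
    intro S _
    rw [ExpW_smul, ExpW_sum]
  rw [hexp, Finset.mul_sum]
  apply Finset.sum_le_sum
  intro S hS
  haveI : Nonempty (Cell m S) := ⟨fun j => ⟨0, hm j.1⟩⟩
  have hnn : (0:ℝ) < (n S : ℝ) := by exact_mod_cast hn S hS
  have inner : ∀ y, ExpW (WW m 𝕊 n p) (fun x => |empZ m 𝕊 n (EE m 𝕊 n x) S y - p S y|)
      ≤ Real.sqrt (p S y * (1 - p S y) / (n S : ℝ)) := by
    intro y
    calc ExpW (WW m 𝕊 n p) (fun x => |empZ m 𝕊 n (EE m 𝕊 n x) S y - p S y|)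
        ≤ Real.sqrt (ExpW (WW m 𝕊 n p) (fun x => (empZ m 𝕊 n (EE m 𝕊 n x) S y - p S y)^2)) :=
          ExpW_abs_le_sqrt (WW m 𝕊 n p) (WW_w0 m 𝕊 n hp) (WW_w1 m 𝕊 n hp) _
      _ = Real.sqrt (p S y * (1 - p S y) / (n S : ℝ)) := by
          rw [evar m 𝕊 n hm hn hp hS y]
  calc (1/2) * ∑ y, ExpW (WW m 𝕊 n p) (fun x => |empZ m 𝕊 n (EE m 𝕊 n x) S y - p S y|)
      ≤ (1/2) * ∑ y, Real.sqrt (p S y * (1 - p S y) / (n S : ℝ)) := by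
        apply mul_le_mul_of_nonneg_left (Finset.sum_le_sum fun y _ => inner y) (by norm_num)
    _ ≤ (1/2) * Real.sqrt (((Fintype.card (Cell m S) : ℝ) - 1) / (n S : ℝ)) := by
        apply mul_le_mul_of_nonneg_left _ (by norm_num)
        exact pmf_sum_sqrt (p S) (hp S hS).1 (hp S hS).2 (n S : ℝ) hnn
end ETbound

section BD
variable {d : ℕ} (m : Fin d → ℕ) (𝕊 : Finset (Finset (Fin d))) (n : Finset (Fin d) → ℕ)

lemma empZ_update_ne (x : ∀ z : Idx 𝕊 n, Cell m z.1.1) (z : Idx 𝕊 n) (a : Cell m z.1.1)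
    {S : Finset (Fin d)} (hS : S ∈ 𝕊) (hSne : S ≠ z.1.1) (y : Cell m S) :
    empZ m 𝕊 n (EE m 𝕊 n (Function.update x z a)) S y = empZ m 𝕊 n (EE m 𝕊 n x) S y := by
  rw [empZ_apply m 𝕊 n _ hS y, empZ_apply m 𝕊 n _ hS y]
  congr 2
  congr 1
  apply Finset.filter_congr
  intro i _
  have hne : (⟨⟨S, hS⟩, i⟩ : Idx 𝕊 n) ≠ z := by
    intro h
    apply hSne
    rw [← h]
  rw [EE_apply, EE_apply, Function.update_of_ne hne]

lemma empZ_update_same (x : ∀ z : Idx 𝕊 n, Cell m z.1.1)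
    {S₀ : Finset (Fin d)} (hS₀ : S₀ ∈ 𝕊) (i₀ : Fin (n S₀)) (a : Cell m S₀)
    (y : Cell m S₀) :
    empZ m 𝕊 n (EE m 𝕊 n (Function.update x ⟨⟨S₀, hS₀⟩, i₀⟩ a)) S₀ y
      - empZ m 𝕊 n (EE m 𝕊 n x) S₀ y
      = (n S₀ : ℝ)⁻¹ * ((if a = y then (1:ℝ) else 0)
          - (if x ⟨⟨S₀, hS₀⟩, i₀⟩ = y then (1:ℝ) else 0)) := by
  rw [empZ_apply m 𝕊 n _ hS₀ y, empZ_apply m 𝕊 n _ hS₀ y]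
  rw [← mul_sub]
  congr 1
  rw [Finset.card_filter, Finset.card_filter]
  push_cast
  rw [← Finset.sum_sub_distrib]
  rw [Finset.sum_eq_single i₀]
  · rw [EE_apply, EE_apply, Function.update_self]
  · intro i _ hi
    have hne : (⟨⟨S₀, hS₀⟩, i⟩ : Idx 𝕊 n) ≠ ⟨⟨S₀, hS₀⟩, i₀⟩ := by
      intro h
      exact hi (eq_of_heq (Sigma.mk.inj_iff.1 h).2)
    rw [EE_apply, EE_apply, Function.update_of_ne hne, sub_self]
  · intro h
    exact absurd (Finset.mem_univ i₀) h

lemma sum_boole_diff {κ : Type*} [Fintype κ] [DecidableEq κ] (a b : κ) :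
    ∑ y : κ, |(if a = y then (1:ℝ) else 0) - (if b = y then (1:ℝ) else 0)| ≤ 2 := by
  have h : ∀ y, |(if a = y then (1:ℝ) else 0) - (if b = y then (1:ℝ) else 0)|
      ≤ (if a = y then (1:ℝ) else 0) + (if b = y then (1:ℝ) else 0) := by
    intro y
    have h1 : (0:ℝ) ≤ (if a = y then (1:ℝ) else 0) := by positivity
    have h2 : (0:ℝ) ≤ (if b = y then (1:ℝ) else 0) := by positivity
    rw [abs_sub_le_iff]
    constructor <;> linarith
  calc ∑ y : κ, |(if a = y then (1:ℝ) else 0) - (if b = y then (1:ℝ) else 0)|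
      ≤ ∑ y : κ, ((if a = y then (1:ℝ) else 0) + (if b = y then (1:ℝ) else 0)) :=
        Finset.sum_le_sum fun y _ => h y
    _ = 2 := by
        rw [Finset.sum_add_distrib, Finset.sum_ite_eq Finset.univ a fun _ => (1:ℝ),
          Finset.sum_ite_eq Finset.univ b fun _ => (1:ℝ)]
        simp
        norm_num

lemma bd_main (hn : ∀ S ∈ 𝕊, 0 < n S) (p : ∀ S : Finset (Fin d), Cell m S → ℝ)
    (z : Idx 𝕊 n) (x : ∀ z' : Idx 𝕊 n, Cell m z'.1.1) (a : Cell m z.1.1) :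
    DistF m 𝕊 (empZ m 𝕊 n (EE m 𝕊 n (Function.update x z a))) p
      - DistF m 𝕊 (empZ m 𝕊 n (EE m 𝕊 n x)) p ≤ (n z.1.1 : ℝ)⁻¹ := by
  obtain ⟨⟨S₀, hS₀⟩, i₀⟩ := z
  unfold DistF
  rw [← Finset.sum_sub_distrib]
  have hzero : ∀ S ∈ 𝕊, S ≠ S₀ →
      (1/2) * (∑ y, |empZ m 𝕊 n (EE m 𝕊 n (Function.update x ⟨⟨S₀, hS₀⟩, i₀⟩ a)) S y - p S y|)
        - (1/2) * (∑ y, |empZ m 𝕊 n (EE m 𝕊 n x) S y - p S y|) = 0 := by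
    intro S hS hSne
    rw [Finset.sum_congr rfl fun y _ => by
      rw [empZ_update_ne m 𝕊 n x _ a hS (by simpa using hSne) y]]
    ring
  rw [Finset.sum_eq_single S₀ (fun S hS hSne => hzero S hS hSne) (fun h => absurd hS₀ h)]
  have habs : ∀ y, |empZ m 𝕊 n (EE m 𝕊 n (Function.update x ⟨⟨S₀, hS₀⟩, i₀⟩ a)) S₀ y - p S₀ y|
      - |empZ m 𝕊 n (EE m 𝕊 n x) S₀ y - p S₀ y|
      ≤ (n S₀ : ℝ)⁻¹ * |(if a = y then (1:ℝ) else 0)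
          - (if x ⟨⟨S₀, hS₀⟩, i₀⟩ = y then (1:ℝ) else 0)| := by
    intro y
    have htri := abs_sub_abs_le_abs_sub
      (empZ m 𝕊 n (EE m 𝕊 n (Function.update x ⟨⟨S₀, hS₀⟩, i₀⟩ a)) S₀ y - p S₀ y)
      (empZ m 𝕊 n (EE m 𝕊 n x) S₀ y - p S₀ y)
    have heq : (empZ m 𝕊 n (EE m 𝕊 n (Function.update x ⟨⟨S₀, hS₀⟩, i₀⟩ a)) S₀ y - p S₀ y)
        - (empZ m 𝕊 n (EE m 𝕊 n x) S₀ y - p S₀ y)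
        = (n S₀ : ℝ)⁻¹ * ((if a = y then (1:ℝ) else 0)
          - (if x ⟨⟨S₀, hS₀⟩, i₀⟩ = y then (1:ℝ) else 0)) := by
      rw [← empZ_update_same m 𝕊 n x hS₀ i₀ a y]
      ring
    rw [heq] at htri
    calc |empZ m 𝕊 n (EE m 𝕊 n (Function.update x ⟨⟨S₀, hS₀⟩, i₀⟩ a)) S₀ y - p S₀ y|
        - |empZ m 𝕊 n (EE m 𝕊 n x) S₀ y - p S₀ y|
        ≤ |(n S₀ : ℝ)⁻¹ * ((if a = y then (1:ℝ) else 0)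
            - (if x ⟨⟨S₀, hS₀⟩, i₀⟩ = y then (1:ℝ) else 0))| := htri
      _ = (n S₀ : ℝ)⁻¹ * |(if a = y then (1:ℝ) else 0)
            - (if x ⟨⟨S₀, hS₀⟩, i₀⟩ = y then (1:ℝ) else 0)| := by
          rw [abs_mul, abs_of_nonneg (by positivity : (0:ℝ) ≤ (n S₀ : ℝ)⁻¹)]
  calc (1/2) * (∑ y, |empZ m 𝕊 n (EE m 𝕊 n (Function.update x ⟨⟨S₀, hS₀⟩, i₀⟩ a)) S₀ y - p S₀ y|)
      - (1/2) * (∑ y, |empZ m 𝕊 n (EE m 𝕊 n x) S₀ y - p S₀ y|)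
      = (1/2) * ∑ y, (|empZ m 𝕊 n (EE m 𝕊 n (Function.update x ⟨⟨S₀, hS₀⟩, i₀⟩ a)) S₀ y - p S₀ y|
          - |empZ m 𝕊 n (EE m 𝕊 n x) S₀ y - p S₀ y|) := by
        rw [Finset.sum_sub_distrib]
        ring
    _ ≤ (1/2) * ∑ y, (n S₀ : ℝ)⁻¹ * |(if a = y then (1:ℝ) else 0)
          - (if x ⟨⟨S₀, hS₀⟩, i₀⟩ = y then (1:ℝ) else 0)| := by
        apply mul_le_mul_of_nonneg_left (Finset.sum_le_sum fun y _ => habs y) (by norm_num)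
    _ ≤ (n S₀ : ℝ)⁻¹ := by
        rw [← Finset.mul_sum]
        have h2 := sum_boole_diff (κ := Cell m S₀) a (x ⟨⟨S₀, hS₀⟩, i₀⟩)
        have hnn : (0:ℝ) ≤ (n S₀ : ℝ)⁻¹ := by positivity
        nlinarith [h2, hnn]
end BD

section Tail
variable {d : ℕ} (m : Fin d → ℕ) (𝕊 : Finset (Finset (Fin d))) (n : Finset (Fin d) → ℕ)

lemma sumC_eq (hn : ∀ S ∈ 𝕊, 0 < n S) :
    ∑ z : Idx 𝕊 n, ((n z.1.1 : ℝ)⁻¹)^2 = ∑ S ∈ 𝕊, (n S : ℝ)⁻¹ := by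
  rw [← Finset.univ_sigma_univ, Finset.sum_sigma]
  rw [← Finset.sum_coe_sort 𝕊 (fun S => (n S : ℝ)⁻¹)]
  apply Finset.sum_congr rfl
  intro S _
  have hstep : ∑ _i : Fin (n S.1), ((n S.1 : ℝ)⁻¹)^2 = (n S.1 : ℝ)⁻¹ := by
    rw [Finset.sum_const]
    simp only [Finset.card_univ, Fintype.card_fin, nsmul_eq_mul]
    have hne : (n S.1 : ℝ) ≠ 0 := by
      have := hn S.1 S.2; positivity
    field_simp
  exact hstep

lemma exp_neg_two_log_two : Real.exp (-(2 * Real.log 2)) = 1/4 := by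
  have h4 : (2:ℝ) * Real.log 2 = Real.log 4 := by
    rw [show (4:ℝ) = 2^2 by norm_num, Real.log_pow]
    push_cast
    ring
  rw [h4, Real.exp_neg, Real.exp_log (by norm_num : (0:ℝ) < 4)]
  norm_num

lemma tail_quarter (hm : ∀ j, 0 < m j) (h𝕊 : 𝕊.Nonempty) (hn : ∀ S ∈ 𝕊, 0 < n S)
    {p : ∀ S : Finset (Fin d), Cell m S → ℝ} (hp : IsFamily m 𝕊 p) :
    ExpW (WW m 𝕊 n p) (fun x =>
      if ExpW (WW m 𝕊 n p) (fun x' => DistF m 𝕊 (empZ m 𝕊 n (EE m 𝕊 n x')) p)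
          + Real.sqrt (Real.log 2 * ∑ S ∈ 𝕊, (n S : ℝ)⁻¹)
          ≤ DistF m 𝕊 (empZ m 𝕊 n (EE m 𝕊 n x)) p then (1:ℝ) else 0)
      ≤ 1/4 := by
  classical
  haveI : ∀ z : Idx 𝕊 n, Nonempty (Cell m z.1.1) := fun z => ⟨fun j => ⟨0, hm j.1⟩⟩
  set sS := ∑ S ∈ 𝕊, (n S : ℝ)⁻¹ with hsS
  have hsS0 : 0 < sS := by
    rw [hsS]
    apply Finset.sum_pos _ h𝕊
    intro S hS
    have := hn S hS
    positivity
  have hlog2 : 0 ≤ Real.log 2 := Real.log_nonneg one_le_two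
  set t := Real.sqrt (Real.log 2 * sS) with htdef
  have ht0 : 0 ≤ t := Real.sqrt_nonneg _
  have htsq : t^2 = Real.log 2 * sS := Real.sq_sqrt (by positivity)
  have hmcd := mcdiarmid_tail (WW m 𝕊 n p) (WW_w0 m 𝕊 n hp) (WW_w1 m 𝕊 n hp)
    Finset.univ (fun x => DistF m 𝕊 (empZ m 𝕊 n (EE m 𝕊 n x)) p)
    (fun z => (n z.1.1 : ℝ)⁻¹) t
    (fun x y hxy => by
      have : x = y := funext fun i => hxy i (Finset.mem_univ i)
      rw [this])
    (fun z _ x a => bd_main m 𝕊 n hn p z x a)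
    ht0
    (by
      have hCeq : (∑ z : Idx 𝕊 n, ((fun z : Idx 𝕊 n => (n z.1.1 : ℝ)⁻¹) z)^2) = sS := by
        simpa using sumC_eq 𝕊 n hn
      rw [hCeq]
      exact hsS0)
  have hCeq : (∑ z : Idx 𝕊 n, ((fun z : Idx 𝕊 n => (n z.1.1 : ℝ)⁻¹) z)^2) = sS := by
    simpa using sumC_eq 𝕊 n hn
  rw [hCeq] at hmcd
  calc ExpW (WW m 𝕊 n p) (fun x =>
      if ExpW (WW m 𝕊 n p) (fun x' => DistF m 𝕊 (empZ m 𝕊 n (EE m 𝕊 n x')) p) + t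
          ≤ DistF m 𝕊 (empZ m 𝕊 n (EE m 𝕊 n x)) p then (1:ℝ) else 0)
      ≤ Real.exp (-(2 * t^2 / sS)) := hmcd
    _ = 1/4 := by
        rw [htsq, show 2 * (Real.log 2 * sS) / sS = 2 * Real.log 2 from by field_simp]
        exact exp_neg_two_log_two
end Tail

lemma jointMass_nonneg {d : ℕ} (m : Fin d → ℕ) (𝕊 : Finset (Finset (Fin d)))
    (n : Finset (Fin d) → ℕ) {p : ∀ S : Finset (Fin d), Cell m S → ℝ}
    (hp : IsFamily m 𝕊 p) (ω : Samples m 𝕊 n) : 0 ≤ jointMass m 𝕊 n p ω :=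
  Finset.prod_nonneg fun S _ => Finset.prod_nonneg fun i _ => (hp S.1 S.2).1 _


/-- upper bound on the minimax testing radius. -/
theorem statement_19 {d : ℕ} (m : Fin d → ℕ) (hm : ∀ j, 0 < m j)
    (𝕊 : Finset (Finset (Fin d))) (h𝕊 : 𝕊.Nonempty) (hSne : ∀ S ∈ 𝕊, S.Nonempty)
    (n : Finset (Fin d) → ℕ) (hn : ∀ S ∈ 𝕊, 0 < n S) :
    rhoStar m 𝕊 n ≤
      ∑ S ∈ 𝕊, Real.sqrt (((Fintype.card (Cell m S) : ℝ) - 1) / (n S : ℝ)) +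
        2 * Real.sqrt (Real.log 2 * ∑ S ∈ 𝕊, 1 / (n S : ℝ)) := by
  classical
  set A := ∑ S ∈ 𝕊, Real.sqrt (((Fintype.card (Cell m S) : ℝ) - 1) / (n S : ℝ)) with hA
  set t' := Real.sqrt (Real.log 2 * ∑ S ∈ 𝕊, (n S : ℝ)⁻¹) with ht'
  have htt : Real.sqrt (Real.log 2 * ∑ S ∈ 𝕊, 1 / (n S : ℝ)) = t' := by
    rw [ht']
    congr 2
    exact Finset.sum_congr rfl fun S _ => one_div _
  rw [htt]
  have hA0 : 0 ≤ A := Finset.sum_nonneg fun S _ => Real.sqrt_nonneg _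
  have ht0 : 0 ≤ t' := Real.sqrt_nonneg _
  set B := A + 2 * t' with hB
  set τ := A / 2 + t' with hτ
  set ψ : Samples m 𝕊 n → ℝ :=
    fun ω => if τ < Rix m 𝕊 (empZ m 𝕊 n ω) then 1 else 0 with hψ
  have hψIcc : ∀ ω, ψ ω ∈ Set.Icc (0:ℝ) 1 := by
    intro ω
    rw [hψ]
    dsimp only
    split_ifs <;> constructor <;> norm_num
  -- type I error bound
  have typeI : ∀ p : ∀ S : Finset (Fin d), Cell m S → ℝ, IsFamily m 𝕊 p →
      Compatible m 𝕊 p → expTest m 𝕊 n p ψ ≤ 1/4 := by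
    intro p hp hpc
    rw [expTest_eq_ExpW]
    have hET : ExpW (WW m 𝕊 n p)
        (fun x => DistF m 𝕊 (empZ m 𝕊 n (EE m 𝕊 n x)) p) ≤ A / 2 := by
      have := ET_bound m 𝕊 n hm hn hp
      rw [← hA] at this
      linarith
    have hpt : ∀ x : ∀ z : Idx 𝕊 n, Cell m z.1.1, ψ (EE m 𝕊 n x) ≤
        (if ExpW (WW m 𝕊 n p) (fun x' => DistF m 𝕊 (empZ m 𝕊 n (EE m 𝕊 n x')) p)
            + Real.sqrt (Real.log 2 * ∑ S ∈ 𝕊, (n S : ℝ)⁻¹)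
            ≤ DistF m 𝕊 (empZ m 𝕊 n (EE m 𝕊 n x)) p then (1:ℝ) else 0) := by
      intro x
      rw [hψ]
      dsimp only
      rw [← ht']
      split_ifs with hc hd
      · norm_num
      · exfalso
        have hRle : Rix m 𝕊 (empZ m 𝕊 n (EE m 𝕊 n x))
            ≤ DistF m 𝕊 (empZ m 𝕊 n (EE m 𝕊 n x)) p :=
          Rix_le_DistF_of_compatible h𝕊 hp hpc (empZ_isFamily m 𝕊 n _ hn)
        push_neg at hd
        rw [hτ] at hc
        linarith
      · norm_num
      · norm_num
    exact le_trans (ExpW_mono _ (WW_w0 m 𝕊 n hp) hpt) (tail_quarter m 𝕊 n hm h𝕊 hn hp)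
  -- type II error bound
  have typeII : ∀ p : ∀ S : Finset (Fin d), Cell m S → ℝ, IsFamily m 𝕊 p →
      B ≤ Rix m 𝕊 p → expTest m 𝕊 n p (fun ω => 1 - ψ ω) ≤ 1/4 := by
    intro p hp hrix
    rw [expTest_eq_ExpW]
    have hET : ExpW (WW m 𝕊 n p)
        (fun x => DistF m 𝕊 (empZ m 𝕊 n (EE m 𝕊 n x)) p) ≤ A / 2 := by
      have := ET_bound m 𝕊 n hm hn hp
      rw [← hA] at this
      linarith
    have hpt : ∀ x : ∀ z : Idx 𝕊 n, Cell m z.1.1, 1 - ψ (EE m 𝕊 n x) ≤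
        (if ExpW (WW m 𝕊 n p) (fun x' => DistF m 𝕊 (empZ m 𝕊 n (EE m 𝕊 n x')) p)
            + Real.sqrt (Real.log 2 * ∑ S ∈ 𝕊, (n S : ℝ)⁻¹)
            ≤ DistF m 𝕊 (empZ m 𝕊 n (EE m 𝕊 n x)) p then (1:ℝ) else 0) := by
      intro x
      rw [hψ]
      dsimp only
      rw [← ht']
      split_ifs with hc hd he
      · norm_num
      · norm_num
      · norm_num
      · exfalso
        have hRle : Rix m 𝕊 p ≤ Rix m 𝕊 (empZ m 𝕊 n (EE m 𝕊 n x))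
            + DistF m 𝕊 p (empZ m 𝕊 n (EE m 𝕊 n x)) :=
          Rix_le_Rix_add_DistF h𝕊 hp (empZ_isFamily m 𝕊 n _ hn)
        rw [DistF_comm] at hRle
        push_neg at hc he
        rw [hτ] at hc
        rw [hB] at hrix
        linarith
    exact le_trans (ExpW_mono _ (WW_w0 m 𝕊 n hp) hpt) (tail_quarter m 𝕊 n hm h𝕊 hn hp)
  -- the minimax risk at level B is at most 1/2
  have hrisk : minimaxRisk m 𝕊 n B ≤ 1/2 := by
    have hbdd : BddBelow {t : ℝ | ∃ ψ' : Samples m 𝕊 n → ℝ,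
        (∀ ω, ψ' ω ∈ Set.Icc (0 : ℝ) 1) ∧
        t = sSup {x | ∃ p, IsFamily m 𝕊 p ∧ Compatible m 𝕊 p ∧ x = expTest m 𝕊 n p ψ'} +
            sSup {x | ∃ p, IsFamily m 𝕊 p ∧ B ≤ Rix m 𝕊 p ∧
              x = expTest m 𝕊 n p (fun ω => 1 - ψ' ω)}} := by
      refine ⟨0, ?_⟩
      rintro tt ⟨ψ', hψ', rfl⟩
      apply add_nonneg
      · apply Real.sSup_nonneg
        rintro x ⟨p, hp, -, rfl⟩
        exact Finset.sum_nonneg fun ω _ =>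
          mul_nonneg (hψ' ω).1 (jointMass_nonneg m 𝕊 n hp ω)
      · apply Real.sSup_nonneg
        rintro x ⟨p, hp, -, rfl⟩
        apply Finset.sum_nonneg
        intro ω _
        have h1 : (0:ℝ) ≤ 1 - ψ' ω := by
          have := (hψ' ω).2
          linarith
        exact mul_nonneg h1 (jointMass_nonneg m 𝕊 n hp ω)
    have hmem := csInf_le hbdd ⟨ψ, hψIcc, rfl⟩
    have hs1 : sSup {x | ∃ p, IsFamily m 𝕊 p ∧ Compatible m 𝕊 p ∧ x = expTest m 𝕊 n p ψ}
        ≤ 1/4 := by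
      apply Real.sSup_le _ (by norm_num)
      rintro x ⟨p, hp, hpc, rfl⟩
      exact typeI p hp hpc
    have hs2 : sSup {x | ∃ p, IsFamily m 𝕊 p ∧ B ≤ Rix m 𝕊 p ∧
        x = expTest m 𝕊 n p (fun ω => 1 - ψ ω)} ≤ 1/4 := by
      apply Real.sSup_le _ (by norm_num)
      rintro x ⟨p, hp, hrix, rfl⟩
      exact typeII p hp hrix
    unfold minimaxRisk
    calc sInf _ ≤ _ := hmem
      _ ≤ 1/2 := by linarith
  -- conclude via the definition of rhoStar
  apply csInf_le
  · exact ⟨0, fun ρ hρ => hρ.1⟩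
  · exact ⟨by linarith, hrisk⟩
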